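/- Let H be a complex Hilbert space, M and N closed subspaces of H with M + N closed, and P, Q the orthogonal projections of H onto M and N. Write Π := P_{M∩N} for the orthogonal projection onto M ∩ N. Then the operator 1 + Π − PQ is invertible in the algebra of bounded operators on H, and (1 + Π − PQ)⁻¹ = ∑_{n=0}^∞ (PQ − Π)ⁿ = Π + ∑_{n=0}^∞ (PQ)ⁿ(1 − Π), where both series converge in operator norm. -/

import Mathlib

open Filter Topology

section Stmt10Aux

variable {H : Type*} [NormedAddCommGroup H] [InnerProductSpace ℂ H]

local notation "⟪" x ", " y "⟫" => @inner ℂ _ _ x y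

variable {K : Submodule ℂ H} {S : H →L[ℂ] H}

theorem stmt10_mem_both_eq_zero {y : H} (h1 : y ∈ K) (h2 : y ∈ Kᗮ) : y = 0 := by
  have := Submodule.mem_orthogonal K y |>.mp h2 y h1
  simpa [inner_self_eq_zero] using this

theorem stmt10_proj_eq_of_mem (hS : ∀ x, S x ∈ K ∧ x - S x ∈ Kᗮ) {y : H} (hy : y ∈ K) :
    S y = y := by
  have h1 : y - S y ∈ K := K.sub_mem hy (hS y).1
  have := stmt10_mem_both_eq_zero h1 (hS y).2
  have := sub_eq_zero.mp this
  exact this.symm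

theorem stmt10_proj_eq_zero (hS : ∀ x, S x ∈ K ∧ x - S x ∈ Kᗮ) {y : H} (hy : y ∈ Kᗮ) :
    S y = 0 := by
  have h2 : S y ∈ Kᗮ := by
    have : S y = y - (y - S y) := by abel
    rw [this]
    exact Kᗮ.sub_mem hy (hS y).2
  exact stmt10_mem_both_eq_zero (hS y).1 h2

theorem stmt10_proj_inner (hS : ∀ x, S x ∈ K ∧ x - S x ∈ Kᗮ) (x y : H) :
    ⟪S x, y⟫ = ⟪S x, S y⟫ := by
  have h0 : ⟪S x, y - S y⟫ = 0 := by
    have := Submodule.mem_orthogonal K (y - S y) |>.mp (hS y).2 (S x) (hS x).1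
    exact this
  rw [inner_sub_right] at h0
  linear_combination h0

theorem stmt10_proj_inner_self (hS : ∀ x, S x ∈ K ∧ x - S x ∈ Kᗮ) (x : H) :
    ⟪S x, x⟫ = (‖S x‖ : ℂ) ^ 2 := by
  rw [stmt10_proj_inner hS x x, inner_self_eq_norm_sq_to_K]
  norm_cast

theorem stmt10_proj_norm_le (hS : ∀ x, S x ∈ K ∧ x - S x ∈ Kᗮ) (x : H) :
    ‖S x‖ ≤ ‖x‖ := by
  have h1 : ‖S x‖ ^ 2 ≤ ‖S x‖ * ‖x‖ := by
    have h2 := norm_inner_le_norm (𝕜 := ℂ) (S x) x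
    rw [stmt10_proj_inner_self hS x] at h2
    calc ‖S x‖ ^ 2 = ‖((‖S x‖ : ℂ)) ^ 2‖ := by
          rw [norm_pow, Complex.norm_real, Real.norm_eq_abs, abs_of_nonneg (norm_nonneg _)]
      _ ≤ ‖S x‖ * ‖x‖ := h2
  rcases eq_or_lt_of_le (norm_nonneg (S x)) with h | h
  · rw [← h]; exact norm_nonneg x
  · nlinarith

end Stmt10Aux

/-- For closed subspaces `M, N` of a Hilbert space with `M + N` closed, orthogonal
projections `P, Q` and `Π = R` the orthogonal projection onto `M ∩ N`, the operator
`1 + Π - PQ` is invertible with inverse `∑ (PQ - Π)ⁿ = Π + ∑ (PQ)ⁿ(1 - Π)`, both series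
converging in operator norm. -/
theorem stmt_10 {H : Type*} [NormedAddCommGroup H] [InnerProductSpace ℂ H] [CompleteSpace H]
    (M N : Submodule ℂ H) (hM : IsClosed (M : Set H)) (hN : IsClosed (N : Set H))
    (hMN : IsClosed ((M ⊔ N : Submodule ℂ H) : Set H))
    (P Q R : H →L[ℂ] H)
    (hP : ∀ x : H, P x ∈ M ∧ x - P x ∈ Mᗮ)
    (hQ : ∀ x : H, Q x ∈ N ∧ x - Q x ∈ Nᗮ)
    (hR : ∀ x : H, R x ∈ M ⊓ N ∧ x - R x ∈ (M ⊓ N)ᗮ) :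
    ∃ T : H →L[ℂ] H,
      (1 + R - P * Q) * T = 1 ∧ T * (1 + R - P * Q) = 1 ∧
      Tendsto (fun m : ℕ => ∑ n ∈ Finset.range m, (P * Q - R) ^ n) atTop (𝓝 T) ∧
      Tendsto (fun m : ℕ => R + ∑ n ∈ Finset.range m, (P * Q) ^ n * (1 - R)) atTop (𝓝 T) := by
  classical
  have hMorth : Mᗮ ≤ (M ⊓ N)ᗮ := Submodule.orthogonal_le inf_le_left
  have hNorth : Nᗮ ≤ (M ⊓ N)ᗮ := Submodule.orthogonal_le inf_le_right
  -- pointwise identities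
  have hPRx : ∀ x, P (R x) = R x := fun x => stmt10_proj_eq_of_mem hP ((hR x).1).1
  have hQRx : ∀ x, Q (R x) = R x := fun x => stmt10_proj_eq_of_mem hQ ((hR x).1).2
  have hRPx : ∀ x, R (P x) = R x := by
    intro x
    have h0 : R (x - P x) = 0 := stmt10_proj_eq_zero hR (hMorth (hP x).2)
    rw [map_sub, sub_eq_zero] at h0
    exact h0.symm
  have hRQx : ∀ x, R (Q x) = R x := by
    intro x
    have h0 : R (x - Q x) = 0 := stmt10_proj_eq_zero hR (hNorth (hQ x).2)
    rw [map_sub, sub_eq_zero] at h0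
    exact h0.symm
  -- operator identities
  have hPR : P * R = R := by ext x; exact hPRx x
  have hQR : Q * R = R := by ext x; exact hQRx x
  have hRP : R * P = R := by ext x; exact hRPx x
  have hRQ : R * Q = R := by ext x; exact hRQx x
  have hRR : R * R = R := by
    ext x; exact stmt10_proj_eq_of_mem hR ((hR x).1)
  have hPQR : (P * Q) * R = R := by rw [mul_assoc, hQR, hPR]
  have hRPQ : R * (P * Q) = R := by rw [← mul_assoc, hRP, hRQ]
  have hpowR : ∀ n : ℕ, (P * Q) ^ n * R = R := by
    intro n
    induction n with
    | zero => simp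
    | succ n ih => rw [pow_succ, mul_assoc, hPQR, ih]
  -- the subspaces
  set M₁ : Submodule ℂ H := M ⊓ (M ⊓ N)ᗮ with hM₁def
  set N₁ : Submodule ℂ H := N ⊓ (M ⊓ N)ᗮ with hN₁def
  set L : Submodule ℂ H := (M ⊔ N) ⊓ (M ⊓ N)ᗮ with hLdef
  -- P-R is the orthogonal projection onto M₁
  have hP' : ∀ x : H, (P - R) x ∈ M₁ ∧ x - (P - R) x ∈ M₁ᗮ := by
    intro x
    constructor
    · refine Submodule.mem_inf.mpr ⟨M.sub_mem (hP x).1 ((hR x).1).1, ?_⟩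
      have : P x - R x = P x - R (P x) := by rw [hRPx]
      rw [ContinuousLinearMap.sub_apply, this]
      exact (hR (P x)).2
    · rw [Submodule.mem_orthogonal]
      intro u hu
      have hu1 : u ∈ M := (Submodule.mem_inf.mp hu).1
      have hu2 : u ∈ (M ⊓ N)ᗮ := (Submodule.mem_inf.mp hu).2
      have e1 : x - (P - R) x = (x - P x) + R x := by
        rw [ContinuousLinearMap.sub_apply]; abel
      rw [e1, inner_add_right]
      have t1 : (inner ℂ u (x - P x) : ℂ) = 0 :=
        Submodule.mem_orthogonal M (x - P x) |>.mp (hP x).2 u hu1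
      have t2 : (inner ℂ u (R x) : ℂ) = 0 := by
        rw [← inner_conj_symm]
        rw [Submodule.mem_orthogonal (M ⊓ N) u |>.mp hu2 (R x) ((hR x).1)]
        simp
      rw [t1, t2, add_zero]
  have hQ' : ∀ x : H, (Q - R) x ∈ N₁ ∧ x - (Q - R) x ∈ N₁ᗮ := by
    intro x
    constructor
    · refine Submodule.mem_inf.mpr ⟨N.sub_mem (hQ x).1 ((hR x).1).2, ?_⟩
      have : Q x - R x = Q x - R (Q x) := by rw [hRQx]
      rw [ContinuousLinearMap.sub_apply, this]
      exact (hR (Q x)).2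
    · rw [Submodule.mem_orthogonal]
      intro u hu
      have hu1 : u ∈ N := (Submodule.mem_inf.mp hu).1
      have hu2 : u ∈ (M ⊓ N)ᗮ := (Submodule.mem_inf.mp hu).2
      have e1 : x - (Q - R) x = (x - Q x) + R x := by
        rw [ContinuousLinearMap.sub_apply]; abel
      rw [e1, inner_add_right]
      have t1 : (inner ℂ u (x - Q x) : ℂ) = 0 :=
        Submodule.mem_orthogonal N (x - Q x) |>.mp (hQ x).2 u hu1
      have t2 : (inner ℂ u (R x) : ℂ) = 0 := by
        rw [← inner_conj_symm]
        rw [Submodule.mem_orthogonal (M ⊓ N) u |>.mp hu2 (R x) ((hR x).1)]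
        simp
      rw [t1, t2, add_zero]
  -- closedness / completeness
  have hMNc : IsClosed ((M ⊓ N : Submodule ℂ H) : Set H) := by
    have : ((M ⊓ N : Submodule ℂ H) : Set H) = (M : Set H) ∩ (N : Set H) := rfl
    rw [this]; exact hM.inter hN
  have hM₁c : IsClosed ((M₁ : Submodule ℂ H) : Set H) := by
    have : ((M₁ : Submodule ℂ H) : Set H) = (M : Set H) ∩ ((M ⊓ N)ᗮ : Set H) := rfl
    rw [this]; exact hM.inter (Submodule.isClosed_orthogonal _)
  have hN₁c : IsClosed ((N₁ : Submodule ℂ H) : Set H) := by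
    have : ((N₁ : Submodule ℂ H) : Set H) = (N : Set H) ∩ ((M ⊓ N)ᗮ : Set H) := rfl
    rw [this]; exact hN.inter (Submodule.isClosed_orthogonal _)
  have hLc : IsClosed ((L : Submodule ℂ H) : Set H) := by
    have : ((L : Submodule ℂ H) : Set H) = ((M ⊔ N : Submodule ℂ H) : Set H) ∩ ((M ⊓ N)ᗮ : Set H) := rfl
    rw [this]; exact hMN.inter (Submodule.isClosed_orthogonal _)
  haveI : CompleteSpace M₁ := hM₁c.completeSpace_coe
  haveI : CompleteSpace N₁ := hN₁c.completeSpace_coe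
  haveI : CompleteSpace L := hLc.completeSpace_coe
  -- the sum map
  have hmemL : ∀ (p : M₁ × N₁), (p.1 : H) + (p.2 : H) ∈ L := by
    intro p
    refine Submodule.mem_inf.mpr ⟨?_, ?_⟩
    · exact Submodule.add_mem _
        (Submodule.mem_sup_left (Submodule.mem_inf.mp p.1.2).1)
        (Submodule.mem_sup_right (Submodule.mem_inf.mp p.2.2).1)
    · exact Submodule.add_mem _ (Submodule.mem_inf.mp p.1.2).2 (Submodule.mem_inf.mp p.2.2).2
  let g : M₁ × N₁ →ₗ[ℂ] L :=
    { toFun := fun p => ⟨(p.1 : H) + (p.2 : H), hmemL p⟩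
      map_add' := by
        intro a b; apply Subtype.ext
        simp only [Prod.fst_add, Prod.snd_add, Submodule.coe_add]
        abel
      map_smul' := by intro c a; apply Subtype.ext; push_cast; simp [smul_add] }
  have hgbound : ∀ p : M₁ × N₁, ‖g p‖ ≤ 2 * ‖p‖ := by
    intro p
    have : ‖g p‖ = ‖(p.1 : H) + (p.2 : H)‖ := rfl
    rw [this, Prod.norm_def]
    calc ‖(p.1 : H) + (p.2 : H)‖ ≤ ‖(p.1 : H)‖ + ‖(p.2 : H)‖ := norm_add_le _ _
      _ ≤ 2 * max ‖p.1‖ ‖p.2‖ := by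
          have h1 : ‖(p.1 : H)‖ ≤ max ‖p.1‖ ‖p.2‖ := le_max_left _ _
          have h2 : ‖(p.2 : H)‖ ≤ max ‖p.1‖ ‖p.2‖ := le_max_right _ _
          linarith
  let f : M₁ × N₁ →L[ℂ] L := g.mkContinuous 2 hgbound
  have hker : LinearMap.ker (f : M₁ × N₁ →ₗ[ℂ] L) = ⊥ := by
    rw [Submodule.eq_bot_iff]
    rintro ⟨x, y⟩ hp
    have h0 : (x : H) + (y : H) = 0 := by
      have := LinearMap.mem_ker.mp hp
      exact congrArg Subtype.val this
    have hxMN : (x : H) ∈ M ⊓ N := by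
      refine Submodule.mem_inf.mpr ⟨(Submodule.mem_inf.mp x.2).1, ?_⟩
      have : (x : H) = -(y : H) := eq_neg_of_add_eq_zero_left h0
      rw [this]
      exact N.neg_mem (Submodule.mem_inf.mp y.2).1
    have hx0 : (x : H) = 0 := stmt10_mem_both_eq_zero hxMN (Submodule.mem_inf.mp x.2).2
    have hy0 : (y : H) = 0 := by rw [hx0, zero_add] at h0; exact h0
    apply Prod.ext <;> apply Subtype.ext <;> simp [hx0, hy0]
  have hrange : LinearMap.range (f : M₁ × N₁ →ₗ[ℂ] L) = ⊤ := by
    rw [Submodule.eq_top_iff']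
    rintro ⟨z, hz⟩
    obtain ⟨hzMN, hzorth⟩ := Submodule.mem_inf.mp hz
    obtain ⟨m, hm, n, hn, hmn⟩ := Submodule.mem_sup.mp hzMN
    have hxM₁ : m - R m ∈ M₁ :=
      Submodule.mem_inf.mpr ⟨M.sub_mem hm (stmt10_proj_eq_of_mem hP ((hR m).1).1 ▸ ((hR m).1).1), (hR m).2⟩
    have hyN₁ : n - R n ∈ N₁ :=
      Submodule.mem_inf.mpr ⟨N.sub_mem hn ((hR n).1).2, (hR n).2⟩
    have hsum : (m - R m) + (n - R n) = z := by
      have hd : z - ((m - R m) + (n - R n)) = R m + R n := by rw [← hmn]; abel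
      have hmem1 : z - ((m - R m) + (n - R n)) ∈ M ⊓ N := by
        rw [hd]; exact Submodule.add_mem _ (hR m).1 (hR n).1
      have hmem2 : z - ((m - R m) + (n - R n)) ∈ (M ⊓ N)ᗮ := by
        refine Submodule.sub_mem _ hzorth (Submodule.add_mem _ (hR m).2 (hR n).2)
      have := stmt10_mem_both_eq_zero hmem1 hmem2
      have := sub_eq_zero.mp this
      exact this.symm
    exact ⟨(⟨m - R m, hxM₁⟩, ⟨n - R n, hyN₁⟩), Subtype.ext hsum⟩
  -- the equivalence and the constant
  let e := ContinuousLinearEquiv.ofBijective f hker hrange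
  set C : ℝ := max ‖(e.symm : L →L[ℂ] M₁ × N₁)‖ 1 with hCdef
  have hC1 : (1 : ℝ) ≤ C := le_max_right _ _
  have hC0 : (0 : ℝ) < C := lt_of_lt_of_le one_pos hC1
  have hkey : ∀ x ∈ M₁, ∀ y ∈ N₁, max ‖x‖ ‖y‖ ≤ C * ‖x + y‖ := by
    intro x hx y hy
    set p : M₁ × N₁ := (⟨x, hx⟩, ⟨y, hy⟩) with hpdef
    have h1 : e.symm (f p) = p := by
      have : f p = e p := by
        rw [ContinuousLinearEquiv.coeFn_ofBijective]
      rw [this, ContinuousLinearEquiv.symm_apply_apply]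
    have h2 : ‖p‖ ≤ ‖(e.symm : L →L[ℂ] M₁ × N₁)‖ * ‖f p‖ := by
      calc ‖p‖ = ‖(e.symm : L →L[ℂ] M₁ × N₁) (f p)‖ := by
            conv_lhs => rw [← h1]
            rfl
        _ ≤ ‖(e.symm : L →L[ℂ] M₁ × N₁)‖ * ‖f p‖ :=
            ContinuousLinearMap.le_opNorm _ _
    have h3 : ‖p‖ = max ‖x‖ ‖y‖ := by
      rw [Prod.norm_def]; rfl
    have h4 : ‖f p‖ = ‖x + y‖ := rfl
    rw [h3, h4] at h2
    calc max ‖x‖ ‖y‖ ≤ ‖(e.symm : L →L[ℂ] M₁ × N₁)‖ * ‖x + y‖ := h2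
      _ ≤ C * ‖x + y‖ :=
          mul_le_mul_of_nonneg_right (le_max_left _ _) (norm_nonneg _)
  -- the angle bound
  set δ : ℝ := 1 - 1 / (2 * C ^ 2) with hδdef
  have h2C : (0 : ℝ) < 2 * C ^ 2 := by positivity
  have hδ0 : (0 : ℝ) ≤ δ := by
    rw [hδdef]
    have h1 : 1 / (2 * C ^ 2) ≤ 1 := by
      rw [div_le_one h2C]; nlinarith
    linarith
  have hδ1 : δ < 1 := by
    rw [hδdef]
    have : 0 < 1 / (2 * C ^ 2) := by positivity
    linarith
  have hangle : ∀ x ∈ M₁, ∀ y ∈ N₁, ‖(inner ℂ x y : ℂ)‖ ≤ δ * (‖x‖ * ‖y‖) := by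
    intro x hx y hy
    set c : ℂ := inner ℂ x y with hcdef
    by_cases hc : c = 0
    · rw [hc]
      simp only [norm_zero]
      positivity
    · set ζ : ℂ := -(‖c‖ : ℂ) / c with hζdef
      have hζc : ζ * c = -(‖c‖ : ℂ) := by
        rw [hζdef, div_mul_cancel₀]
        exact hc
      have hζnorm : ‖ζ‖ = 1 := by
        rw [hζdef, norm_div, norm_neg, Complex.norm_real, Real.norm_eq_abs,
          abs_of_nonneg (norm_nonneg _)]
        field_simp
      set a : H := (‖y‖ : ℂ) • x with hadef
      set b : H := (ζ * (‖x‖ : ℂ)) • y with hbdef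
      set s : ℝ := ‖x‖ * ‖y‖ with hsdef
      have hs0 : 0 ≤ s := by positivity
      have haM : a ∈ M₁ := M₁.smul_mem _ hx
      have hbN : b ∈ N₁ := N₁.smul_mem _ hy
      have hna : ‖a‖ = s := by
        rw [hadef, norm_smul, Complex.norm_real, Real.norm_eq_abs,
          abs_of_nonneg (norm_nonneg _), hsdef, mul_comm]
      have hnb : ‖b‖ = s := by
        rw [hbdef, norm_smul, norm_mul, hζnorm, one_mul, Complex.norm_real,
          Real.norm_eq_abs, abs_of_nonneg (norm_nonneg _), hsdef]
      have hinner : (inner ℂ a b : ℂ) = -((s : ℂ) * (‖c‖ : ℂ)) := by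
        rw [hadef, hbdef, inner_smul_left, inner_smul_right, ← hcdef]
        rw [Complex.conj_ofReal]
        have hse : ((s : ℂ)) = (‖x‖ : ℂ) * (‖y‖ : ℂ) := by
          rw [hsdef]; push_cast; ring
        rw [hse]
        linear_combination (‖y‖ : ℂ) * (‖x‖ : ℂ) * hζc
      have hsq : ‖a + b‖ ^ 2 = 2 * s ^ 2 - 2 * (s * ‖c‖) := by
        rw [norm_add_sq (𝕜 := ℂ), hna, hnb, hinner]
        have hre : RCLike.re (-((s : ℂ) * (‖c‖ : ℂ))) = -(s * ‖c‖) := by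
          simp [← Complex.ofReal_mul]
        rw [hre]
        ring
      have hmax := hkey a haM b hbN
      have hsa : s ≤ C * ‖a + b‖ := by
        rw [hna, hnb] at hmax
        simpa using hmax
      have hs2 : s ^ 2 ≤ C ^ 2 * (2 * s ^ 2 - 2 * (s * ‖c‖)) := by
        have := mul_le_mul hsa hsa hs0 (by positivity)
        calc s ^ 2 = s * s := sq s
          _ ≤ (C * ‖a + b‖) * (C * ‖a + b‖) := this
          _ = C ^ 2 * ‖a + b‖ ^ 2 := by ring
          _ = C ^ 2 * (2 * s ^ 2 - 2 * (s * ‖c‖)) := by rw [hsq]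
      rcases eq_or_lt_of_le hs0 with hs | hs
      · have h6 : ‖c‖ ≤ s := by rw [hsdef]; exact norm_inner_le_norm x y
        have h7 : ‖c‖ ≤ 0 := hs ▸ h6
        exact absurd (norm_eq_zero.mp (le_antisymm h7 (norm_nonneg c))) hc
      · have hlin : s ≤ 2 * C ^ 2 * s - 2 * C ^ 2 * ‖c‖ := by
          have h5 : s * s ≤ (2 * C ^ 2 * s - 2 * C ^ 2 * ‖c‖) * s := by
            calc s * s = s ^ 2 := (sq s).symm
              _ ≤ C ^ 2 * (2 * s ^ 2 - 2 * (s * ‖c‖)) := hs2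
              _ = (2 * C ^ 2 * s - 2 * C ^ 2 * ‖c‖) * s := by ring
          exact le_of_mul_le_mul_right h5 hs
        have h7 : 2 * C ^ 2 * ‖c‖ ≤ (2 * C ^ 2 - 1) * s := by linarith
        have h8 : ‖c‖ ≤ ((2 * C ^ 2 - 1) / (2 * C ^ 2)) * s := by
          rw [div_mul_eq_mul_div, le_div_iff₀ h2C]
          linarith [h7]
        have h9 : (2 * C ^ 2 - 1) / (2 * C ^ 2) = 1 - 1 / (2 * C ^ 2) := by
          field_simp
        rw [hδdef, ← h9]
        exact h8
  -- norm bound for P*Q - R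
  have hfactor : P * Q - R = (P - R) * (Q - R) := by
    rw [sub_mul, mul_sub, mul_sub, hPR, hRQ, hRR]
    abel
  have hδnorm : ∀ z : H, ‖(P * Q - R) z‖ ≤ δ * ‖z‖ := by
    intro z
    have happ : (P * Q - R) z = (P - R) ((Q - R) z) := by rw [hfactor]; rfl
    set y : H := (Q - R) z with hydef
    set x : H := (P - R) y with hxdef
    have hxM : x ∈ M₁ := (hP' y).1
    have hyN : y ∈ N₁ := (hQ' z).1
    have hxsq : (inner ℂ x y : ℂ) = (‖x‖ : ℂ) ^ 2 := stmt10_proj_inner_self hP' y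
    have h1 : ‖x‖ ^ 2 ≤ δ * (‖x‖ * ‖y‖) := by
      have h0 := hangle x hxM y hyN
      rw [hxsq] at h0
      calc ‖x‖ ^ 2 = ‖((‖x‖ : ℂ)) ^ 2‖ := by
            rw [norm_pow, Complex.norm_real, Real.norm_eq_abs, abs_of_nonneg (norm_nonneg _)]
        _ ≤ δ * (‖x‖ * ‖y‖) := h0
    have hyz : ‖y‖ ≤ ‖z‖ := stmt10_proj_norm_le hQ' z
    have h2 : ‖x‖ ≤ δ * ‖z‖ := by
      rcases eq_or_lt_of_le (norm_nonneg x) with h | h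
      · rw [← h]; positivity
      · have h3 : ‖x‖ ≤ δ * ‖y‖ := by
          have h4 : ‖x‖ * ‖x‖ ≤ (δ * ‖y‖) * ‖x‖ := by
            calc ‖x‖ * ‖x‖ = ‖x‖ ^ 2 := (sq ‖x‖).symm
              _ ≤ δ * (‖x‖ * ‖y‖) := h1
              _ = (δ * ‖y‖) * ‖x‖ := by ring
          exact le_of_mul_le_mul_right h4 h
        calc ‖x‖ ≤ δ * ‖y‖ := h3
          _ ≤ δ * ‖z‖ := mul_le_mul_of_nonneg_left hyz hδ0
    rw [happ]
    exact h2
  have hopnorm : ‖P * Q - R‖ ≤ δ := ContinuousLinearMap.opNorm_le_bound _ hδ0 hδnorm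
  have hAlt : ‖P * Q - R‖ < 1 := lt_of_le_of_lt hopnorm hδ1
  set A : H →L[ℂ] H := P * Q - R with hAdef
  have hform : 1 + R - P * Q = 1 - A := by rw [hAdef]; abel
  have hsummable : Summable (fun n : ℕ => A ^ n) :=
    summable_geometric_of_norm_lt_one hAlt
  have hApow : ∀ n : ℕ, 1 ≤ n → A ^ n = (P * Q) ^ n - R := by
    intro n hn
    induction n with
    | zero => omega
    | succ n ih =>
      rcases Nat.lt_or_ge n 1 with h | h
      · have hn0 : n = 0 := by omega
        subst hn0
        simp [hAdef]
      · rw [pow_succ, ih h, hAdef, sub_mul, mul_sub, mul_sub, hpowR n, hRPQ, hRR, ← pow_succ]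
        abel
  have heq : ∀ m : ℕ, 1 ≤ m →
      ∑ n ∈ Finset.range m, A ^ n
        = R + ∑ n ∈ Finset.range m, (P * Q) ^ n * (1 - R) := by
    intro m hm
    induction m with
    | zero => omega
    | succ m ih =>
      rcases Nat.lt_or_ge m 1 with h | h
      · have hm0 : m = 0 := by omega
        subst hm0
        rw [Finset.sum_range_one, Finset.sum_range_one, pow_zero, pow_zero, one_mul]
        abel
      · have hterm : (P * Q) ^ m * (1 - R) = A ^ m := by
          rw [mul_sub, mul_one, hpowR m, hApow m h]
        rw [Finset.sum_range_succ, Finset.sum_range_succ, ih h, hterm]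
        abel
  refine ⟨∑' n : ℕ, A ^ n, ?_, ?_, ?_, ?_⟩
  · rw [hform]
    exact mul_neg_geom_series A hAlt
  · rw [hform]
    exact geom_series_mul_neg A hAlt
  · exact hsummable.hasSum.tendsto_sum_nat
  · exact Tendsto.congr' (eventually_atTop.mpr ⟨1, fun m hm => heq m hm⟩)
      hsummable.hasSum.tendsto_sum_nat
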